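/- Let n ≥ 1, and let γ : [0, L₁] → ℝⁿ and η : [0, L₂] → ℝⁿ (L₁, L₂ > 0) be unit-speed C¹ curves with γ(0) = η(0), satisfying the tangent monotonicity assumption: for all s, s' ∈ [0, L₁] and t, t' ∈ [0, L₂], if s + t ≤ s' + t' then ‖γ'(s) − η'(t)‖ ≤ ‖γ'(s') − η'(t')‖. Then for every ε with 0 < ε ≤ min(L₁, L₂) and all σ_x, σ_t > 0, ⟨μ_γ, μ_η⟩ ≤ ε² + L₂·ε·exp(−‖γ'(0) − η'(ε)‖²/σ_t²) + L₁·ε·exp(−‖γ'(ε) − η'(0)‖²/σ_t²) + L₁·L₂·exp(−‖γ'(ε) − η'(ε)‖²/σ_t²). -/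

import Mathlib

open Set MeasureTheory

/-- The Gaussian oriented-varifold inner product of two curves `γ : [0, L₁] → ℝⁿ` and
`η : [0, L₂] → ℝⁿ`, given together with their (unit) tangent fields `tγ`, `tη` and
kernel widths `σx`, `σt`. -/
noncomputable def vfInner {n : ℕ} (σx σt L₁ L₂ : ℝ)
    (γ tγ η tη : ℝ → EuclideanSpace ℝ (Fin n)) : ℝ :=
  ∫ s in (0:ℝ)..L₁, ∫ t in (0:ℝ)..L₂,
    Real.exp (-‖γ s - η t‖ ^ 2 / σx ^ 2) * Real.exp (-‖tγ s - tη t‖ ^ 2 / σt ^ 2)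


lemma stepIntegrableOn (a b c x y : ℝ) :
    MeasureTheory.IntegrableOn (fun t => if t ≤ c then a else b) (Ioc x y) := by
  have hm : Measurable (fun t : ℝ => if t ≤ c then a else b) :=
    Measurable.ite measurableSet_Iic measurable_const measurable_const
  refine Integrable.mono' (g := fun _ => max ‖a‖ ‖b‖) ?_ hm.aestronglyMeasurable ?_
  · exact integrableOn_const measure_Ioc_lt_top.ne
  · filter_upwards with t
    by_cases h : t ≤ c <;> simp [h, le_max_left, le_max_right]

lemma stepIntegral (a b : ℝ) {c d : ℝ} (h0 : 0 ≤ c) (hcd : c ≤ d) :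
    ∫ t in Ioc 0 d, (if t ≤ c then a else b) = c * a + (d - c) * b := by
  rw [← Ioc_union_Ioc_eq_Ioc h0 hcd,
    setIntegral_union (Ioc_disjoint_Ioc_of_le le_rfl) measurableSet_Ioc
      (stepIntegrableOn a b c 0 c) (stepIntegrableOn a b c c d)]
  have h1 : ∫ t in Ioc 0 c, (if t ≤ c then a else b) = c * a := by
    rw [setIntegral_congr_fun measurableSet_Ioc (fun t ht => if_pos ht.2),
      setIntegral_const]
    simp [Real.volume_Ioc, ENNReal.toReal_ofReal h0, h0]
  have h2 : ∫ t in Ioc c d, (if t ≤ c then a else b) = (d - c) * b := by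
    rw [setIntegral_congr_fun measurableSet_Ioc (fun t ht => if_neg (not_le.mpr ht.1)),
      setIntegral_const]
    simp [Real.volume_Ioc, ENNReal.toReal_ofReal (sub_nonneg.mpr hcd), hcd]
  rw [h1, h2]

/-- Explicit upper bound on the cross inner product of two branching edges `γ`, `η`
(unit-speed C¹ curves with common starting point `γ 0 = η 0`) satisfying the tangent-distance
monotonicity Assumption 2, obtained by splitting the double integral near the branching point. -/
theorem vfInner_upper_bound_branching_edges
    {n : ℕ} (hn : 1 ≤ n) (L₁ L₂ : ℝ) (hL₁ : 0 < L₁) (hL₂ : 0 < L₂)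
    (γ tγ η tη : ℝ → EuclideanSpace ℝ (Fin n))
    (hγderiv : ∀ s ∈ Icc (0:ℝ) L₁, HasDerivWithinAt γ (tγ s) (Icc 0 L₁) s)
    (hηderiv : ∀ t ∈ Icc (0:ℝ) L₂, HasDerivWithinAt η (tη t) (Icc 0 L₂) t)
    (hγunit : ∀ s ∈ Icc (0:ℝ) L₁, ‖tγ s‖ = 1)
    (hηunit : ∀ t ∈ Icc (0:ℝ) L₂, ‖tη t‖ = 1)
    (hjoin : γ 0 = η 0)
    -- Assumption 2: tangent distance monotone in total arc length from the branching point
    (hA2 : ∀ s ∈ Icc (0:ℝ) L₁, ∀ s' ∈ Icc (0:ℝ) L₁, ∀ t ∈ Icc (0:ℝ) L₂, ∀ t' ∈ Icc (0:ℝ) L₂,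
      s + t ≤ s' + t' → ‖tγ s - tη t‖ ≤ ‖tγ s' - tη t'‖)
    (ε : ℝ) (hε0 : 0 < ε) (hεmin : ε ≤ min L₁ L₂) (σx σt : ℝ) (hσx : 0 < σx) (hσt : 0 < σt) :
    vfInner σx σt L₁ L₂ γ tγ η tη ≤
      ε ^ 2 + L₂ * ε * Real.exp (-‖tγ 0 - tη ε‖ ^ 2 / σt ^ 2)
        + L₁ * ε * Real.exp (-‖tγ ε - tη 0‖ ^ 2 / σt ^ 2)
        + L₁ * L₂ * Real.exp (-‖tγ ε - tη ε‖ ^ 2 / σt ^ 2) := by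
  have hεL₁ : ε ≤ L₁ := hεmin.trans (min_le_left _ _)
  have hεL₂ : ε ≤ L₂ := hεmin.trans (min_le_right _ _)
  set E : ℝ → ℝ → ℝ := fun a b => Real.exp (-‖tγ a - tη b‖ ^ 2 / σt ^ 2) with hE
  set f : ℝ → ℝ → ℝ := fun s t =>
    Real.exp (-‖γ s - η t‖ ^ 2 / σx ^ 2) * Real.exp (-‖tγ s - tη t‖ ^ 2 / σt ^ 2) with hf
  have hone : ∀ (v : EuclideanSpace ℝ (Fin n)) (σ : ℝ), 0 < σ →
      Real.exp (-‖v‖ ^ 2 / σ ^ 2) ≤ 1 := by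
    intro v σ hσ
    rw [Real.exp_le_one_iff]
    have h1 : 0 ≤ ‖v‖ ^ 2 / σ ^ 2 := by positivity
    rw [neg_div]; linarith
  have hexp_le : ∀ x y : ℝ, 0 ≤ y → y ≤ x →
      Real.exp (-x ^ 2 / σt ^ 2) ≤ Real.exp (-y ^ 2 / σt ^ 2) := by
    intro x y hy hxy
    apply Real.exp_le_exp.mpr
    rw [neg_div, neg_div, neg_le_neg_iff]
    have h2 : y ^ 2 ≤ x ^ 2 := pow_le_pow_left₀ hy hxy 2
    have hσ : (0:ℝ) < σt ^ 2 := by positivity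
    exact div_le_div_of_nonneg_right h2 hσ.le
  have h0L₁ : (0:ℝ) ∈ Icc (0:ℝ) L₁ := ⟨le_refl _, hL₁.le⟩
  have h0L₂ : (0:ℝ) ∈ Icc (0:ℝ) L₂ := ⟨le_refl _, hL₂.le⟩
  have hεL₁' : ε ∈ Icc (0:ℝ) L₁ := ⟨hε0.le, hεL₁⟩
  have hεL₂' : ε ∈ Icc (0:ℝ) L₂ := ⟨hε0.le, hεL₂⟩
  have key : ∀ s ∈ Ioc (0:ℝ) L₁, ∀ t ∈ Ioc (0:ℝ) L₂,
      f s t ≤ if t ≤ ε then (if s ≤ ε then 1 else E ε 0) else (if s ≤ ε then E 0 ε else E ε ε) := by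
    intro s hs t ht
    have hsI : s ∈ Icc (0:ℝ) L₁ := ⟨hs.1.le, hs.2⟩
    have htI : t ∈ Icc (0:ℝ) L₂ := ⟨ht.1.le, ht.2⟩
    have h1 : Real.exp (-‖γ s - η t‖ ^ 2 / σx ^ 2) ≤ 1 := hone _ _ hσx
    have hfle : ∀ a ∈ Icc (0:ℝ) L₁, ∀ b ∈ Icc (0:ℝ) L₂, a + b ≤ s + t →
        f s t ≤ E a b := by
      intro a ha b hb hab
      have h2 : Real.exp (-‖tγ s - tη t‖ ^ 2 / σt ^ 2) ≤ E a b :=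
        hexp_le _ _ (norm_nonneg _) (hA2 a ha s hsI b hb t htI hab)
      calc f s t ≤ 1 * E a b := mul_le_mul h1 h2 (Real.exp_nonneg _) zero_le_one
        _ = E a b := one_mul _
    by_cases hts : t ≤ ε <;> by_cases hss : s ≤ ε <;> simp only [hts, hss, if_true, if_false]
    · calc f s t ≤ 1 * 1 := mul_le_mul h1 (hone _ _ hσt) (Real.exp_nonneg _) zero_le_one
        _ = 1 := one_mul 1
    · exact hfle ε hεL₁' 0 h0L₂ (by push_neg at hss; linarith [ht.1])
    · exact hfle 0 h0L₁ ε hεL₂' (by push_neg at hts; linarith [hs.1])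
    · exact hfle ε hεL₁' ε hεL₂' (by push_neg at hts hss; linarith)
  have hinner : ∀ s ∈ Ioc (0:ℝ) L₁,
      (∫ t in Ioc (0:ℝ) L₂, f s t) ≤
        if s ≤ ε then ε * 1 + (L₂ - ε) * E 0 ε else ε * E ε 0 + (L₂ - ε) * E ε ε := by
    intro s hs
    by_cases hss : s ≤ ε
    · have := integral_mono_of_nonneg
        (Filter.Eventually.of_forall fun t => mul_nonneg (Real.exp_nonneg _) (Real.exp_nonneg _))
        (stepIntegrableOn 1 (E 0 ε) ε 0 L₂)
        ((ae_restrict_iff' measurableSet_Ioc).mpr (Filter.Eventually.of_forall fun t ht => by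
          have := key s hs t ht; simp only [hss, if_true] at this; exact this))
      rw [stepIntegral 1 (E 0 ε) hε0.le hεL₂] at this
      simpa [hss] using this
    · have := integral_mono_of_nonneg
        (Filter.Eventually.of_forall fun t => mul_nonneg (Real.exp_nonneg _) (Real.exp_nonneg _))
        (stepIntegrableOn (E ε 0) (E ε ε) ε 0 L₂)
        ((ae_restrict_iff' measurableSet_Ioc).mpr (Filter.Eventually.of_forall fun t ht => by
          have := key s hs t ht; simp only [hss, if_false] at this; exact this))
      rw [stepIntegral (E ε 0) (E ε ε) hε0.le hεL₂] at this
      simpa [hss] using this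
  have houter : (∫ s in Ioc (0:ℝ) L₁, ∫ t in Ioc (0:ℝ) L₂, f s t) ≤
      ε * (ε * 1 + (L₂ - ε) * E 0 ε) + (L₁ - ε) * (ε * E ε 0 + (L₂ - ε) * E ε ε) := by
    have := integral_mono_of_nonneg
      (Filter.Eventually.of_forall fun s => integral_nonneg fun t =>
        mul_nonneg (Real.exp_nonneg _) (Real.exp_nonneg _))
      (stepIntegrableOn (ε * 1 + (L₂ - ε) * E 0 ε) (ε * E ε 0 + (L₂ - ε) * E ε ε) ε 0 L₁)
      ((ae_restrict_iff' measurableSet_Ioc).mpr (Filter.Eventually.of_forall hinner))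
    rwa [stepIntegral _ _ hε0.le hεL₁] at this
  have hvf : vfInner σx σt L₁ L₂ γ tγ η tη = ∫ s in Ioc (0:ℝ) L₁, ∫ t in Ioc (0:ℝ) L₂, f s t := by
    unfold vfInner
    rw [intervalIntegral.integral_of_le hL₁.le]
    refine setIntegral_congr_fun measurableSet_Ioc fun s _ => ?_
    rw [intervalIntegral.integral_of_le hL₂.le]
  rw [hvf]
  refine houter.trans ?_
  have e1 : 0 ≤ E 0 ε := Real.exp_nonneg _
  have e2 : 0 ≤ E ε 0 := Real.exp_nonneg _
  have e3 : 0 ≤ E ε ε := Real.exp_nonneg _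
  nlinarith [mul_nonneg (mul_nonneg hε0.le hε0.le) e1,
    mul_nonneg (mul_nonneg hε0.le hε0.le) e2,
    mul_nonneg (mul_nonneg hε0.le (by linarith : (0:ℝ) ≤ L₁ + L₂ - ε)) e3]
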